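/- Lemma 2, part 2: Let Φ be a field and let V and W be vector spaces over Φ. Let M = U(L(V))·W ⊆ L(V ⊕ W). Then, inside the universal enveloping algebra of the free Lie algebra L(V ⊕ W), one has U(L(V ⊕ W)) = U(L(V)) + U(L(M))·M·U(L(V)) as a sum of subspaces. -/

import Mathlib

variable (Φ : Type*) [Field Φ]

/-- The Lie ideal of linearity relations inside the free Lie algebra on the type
underlying a module, used to define the free Lie algebra on a module. -/
noncomputable def freeLieModuleRel (M : Type*) [AddCommGroup M] [Module Φ M] :
    LieIdeal Φ (FreeLieAlgebra Φ M) :=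
  LieSubmodule.lieSpan Φ _
    ({x | ∃ a b : M, x = FreeLieAlgebra.of Φ (a + b) - FreeLieAlgebra.of Φ a -
        FreeLieAlgebra.of Φ b} ∪
     {x | ∃ (c : Φ) (a : M), x = FreeLieAlgebra.of Φ (c • a) - c • FreeLieAlgebra.of Φ a})

/-- The free Lie algebra on a module `M`: the quotient of the free Lie algebra on the
type `M` by the linearity relations. -/
abbrev FreeLieModule (M : Type*) [AddCommGroup M] [Module Φ M] :=
  FreeLieAlgebra Φ M ⧸ freeLieModuleRel Φ M

/-- The canonical linear embedding of a module into the free Lie algebra on it. -/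
noncomputable def FreeLieModule.ι (M : Type*) [AddCommGroup M] [Module Φ M] :
    M →ₗ[Φ] FreeLieModule Φ M where
  toFun a := (freeLieModuleRel Φ M).toSubmodule.mkQ (FreeLieAlgebra.of Φ a)
  map_add' a b := by
    show (freeLieModuleRel Φ M).toSubmodule.mkQ (FreeLieAlgebra.of Φ (a + b)) =
      (freeLieModuleRel Φ M).toSubmodule.mkQ (FreeLieAlgebra.of Φ a) +
        (freeLieModuleRel Φ M).toSubmodule.mkQ (FreeLieAlgebra.of Φ b)
    rw [← sub_eq_zero, ← map_add, ← map_sub, Submodule.mkQ_apply,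
      Submodule.Quotient.mk_eq_zero]
    exact LieSubmodule.subset_lieSpan (Or.inl ⟨a, b, (sub_sub _ _ _).symm⟩)
  map_smul' c a := by
    show (freeLieModuleRel Φ M).toSubmodule.mkQ (FreeLieAlgebra.of Φ (c • a)) =
      c • (freeLieModuleRel Φ M).toSubmodule.mkQ (FreeLieAlgebra.of Φ a)
    rw [← sub_eq_zero, ← map_smul, ← map_sub, Submodule.mkQ_apply,
      Submodule.Quotient.mk_eq_zero]
    exact LieSubmodule.subset_lieSpan (Or.inr ⟨c, a, rfl⟩)

/-- The smallest subspace of a Lie algebra containing `s` and stable under the adjoint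
action of every element of `K`; when `K` is (the underlying set of) a Lie subalgebra `𝔨`
this is the `U(𝔨)`-submodule generated by `s`. -/
def adSpan {L : Type*} [LieRing L] [LieAlgebra Φ L] (K s : Set L) : Submodule Φ L :=
  sInf {P | s ⊆ P ∧ ∀ x ∈ K, ∀ p ∈ P, ⁅x, p⁆ ∈ P}

/-- The span of brackets `⁅p, q⁆` with `p ∈ P` and `q ∈ Q`. -/
def bracketSpan {L : Type*} [LieRing L] [LieAlgebra Φ L] (P Q : Submodule Φ L) :
    Submodule Φ L :=
  Submodule.span Φ {x | ∃ p ∈ P, ∃ q ∈ Q, x = ⁅p, q⁆}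

/-- The quotient map onto the quotient of a Lie algebra by an ideal, as a Lie algebra
homomorphism. -/
def lieQuotientMk {L : Type*} [LieRing L] [LieAlgebra Φ L] (I : LieIdeal Φ L) :
    L →ₗ⁅Φ⁆ L ⧸ I :=
  { I.toSubmodule.mkQ with map_lie' := fun {_ _} => rfl }

variable (V W : Type*) [AddCommGroup V] [Module Φ V] [AddCommGroup W] [Module Φ W]

/-- The canonical embedding of `V` into the free Lie algebra on `V ⊕ W`. -/
noncomputable def ιV : V →ₗ[Φ] FreeLieModule Φ (V × W) :=
  (FreeLieModule.ι Φ (V × W)).comp (LinearMap.inl Φ V W)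

/-- The canonical embedding of `W` into the free Lie algebra on `V ⊕ W`. -/
noncomputable def ιW : W →ₗ[Φ] FreeLieModule Φ (V × W) :=
  (FreeLieModule.ι Φ (V × W)).comp (LinearMap.inr Φ V W)

/-- The Lie subalgebra of `L(V ⊕ W)` generated by `V`; it is a copy of `L(V)`. -/
noncomputable def lieV : LieSubalgebra Φ (FreeLieModule Φ (V × W)) :=
  LieSubalgebra.lieSpan Φ _ (Set.range (ιV Φ V W))

/-- The subspace `M = U(L(V)) · W` of `L(V ⊕ W)`: the smallest subspace containing `W`
and stable under the adjoint action of the subalgebra `L(V)`. -/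
noncomputable def lazardM : Submodule Φ (FreeLieModule Φ (V × W)) :=
  adSpan Φ ↑(lieV Φ V W) (Set.range (ιW Φ V W))

/-- The Lie ideal of `L(V ⊕ W)` generated by `W`. -/
noncomputable def idealW : LieIdeal Φ (FreeLieModule Φ (V × W)) :=
  LieSubmodule.lieSpan Φ _ (Set.range (ιW Φ V W))

/-- The unital subalgebra of `U(L(V ⊕ W))` generated by the image of the subalgebra
`L(V) ⊆ L(V ⊕ W)`; it is a copy of `U(L(V))`. -/
noncomputable def envV : Subalgebra Φ (UniversalEnvelopingAlgebra Φ (FreeLieModule Φ (V × W))) :=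
  Algebra.adjoin Φ (UniversalEnvelopingAlgebra.ι Φ '' ((lieV Φ V W : Set (FreeLieModule Φ (V × W)))))

/-- The unital subalgebra of `U(L(V ⊕ W))` generated by the image of the ideal of
`L(V ⊕ W)` generated by `W`, the latter being identified with `L(M)` by Lazard's
elimination theorem; it is a copy of `U(L(M))`. -/
noncomputable def envM : Subalgebra Φ (UniversalEnvelopingAlgebra Φ (FreeLieModule Φ (V × W))) :=
  Algebra.adjoin Φ (UniversalEnvelopingAlgebra.ι Φ '' ((idealW Φ V W : Set (FreeLieModule Φ (V × W)))))

attribute [local instance 100] LieRing.ofAssociativeRing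

section Aux

lemma subset_adSpan' {L : Type*} [LieRing L] [LieAlgebra Φ L] (K s : Set L) :
    s ⊆ (adSpan Φ K s : Set L) := fun x hx =>
  Submodule.mem_sInf.2 fun _ hP => hP.1 hx

lemma adSpan_lie_mem' {L : Type*} [LieRing L] [LieAlgebra Φ L] {K s : Set L} {x p : L}
    (hx : x ∈ K) (hp : p ∈ adSpan Φ K s) : ⁅x, p⁆ ∈ adSpan Φ K s :=
  Submodule.mem_sInf.2 fun P hP => hP.2 x hx p (Submodule.mem_sInf.1 hp P hP)

variable {Φ V W}

local notation "L'" => FreeLieModule Φ (V × W)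
local notation "j" => UniversalEnvelopingAlgebra.ι Φ (L := FreeLieModule Φ (V × W))

/-- Commutation with any `ι x` preserves `envM`, since `idealW` is an ideal. -/
lemma comm_mem_envM (x : L') {u : UniversalEnvelopingAlgebra Φ L'} (hu : u ∈ envM Φ V W) :
    j x * u - u * j x ∈ envM Φ V W := by
  induction hu using Algebra.adjoin_induction with
  | mem y hy =>
      obtain ⟨z, hz, rfl⟩ := hy
      have h1 : j x * j z - j z * j x = j ⁅x, z⁆ := by
        rw [LieHom.map_lie, Ring.lie_def]
      rw [h1]
      exact Algebra.subset_adjoin ⟨⁅x, z⁆, (idealW Φ V W).lie_mem hz, rfl⟩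
  | algebraMap r =>
      rw [Algebra.commutes, sub_self]; exact Subalgebra.zero_mem _
  | add a b ha hb iha ihb =>
      have : j x * (a + b) - (a + b) * j x = (j x * a - a * j x) + (j x * b - b * j x) := by
        noncomm_ring
      rw [this]; exact add_mem iha ihb
  | mul a b ha hb iha ihb =>
      have : j x * (a * b) - (a * b) * j x =
          (j x * a - a * j x) * b + a * (j x * b - b * j x) := by noncomm_ring
      rw [this]; exact add_mem (mul_mem iha hb) (mul_mem ha ihb)

/-- The big submodule `U(L(V)) + U(L(M))·M·U(L(V))`. -/
noncomputable abbrev bigP : Submodule Φ (UniversalEnvelopingAlgebra Φ L') :=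
  Subalgebra.toSubmodule (envV Φ V W) ⊔
    Subalgebra.toSubmodule (envM Φ V W) *
      Submodule.map (UniversalEnvelopingAlgebra.ι Φ).toLinearMap (lazardM Φ V W) *
      Subalgebra.toSubmodule (envV Φ V W)

lemma mem_triple {u m v : UniversalEnvelopingAlgebra Φ L'} (hu : u ∈ envM Φ V W)
    (hm : m ∈ Submodule.map (UniversalEnvelopingAlgebra.ι Φ).toLinearMap (lazardM Φ V W))
    (hv : v ∈ envV Φ V W) :
    u * m * v ∈ Subalgebra.toSubmodule (envM Φ V W) *
      Submodule.map (UniversalEnvelopingAlgebra.ι Φ).toLinearMap (lazardM Φ V W) *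
      Subalgebra.toSubmodule (envV Φ V W) :=
  Submodule.mul_mem_mul (Submodule.mul_mem_mul hu hm) hv

/-- Reduction of `j x * p ∈ bigP` to the two generating cases. -/
lemma reduce (x : L')
    (hA : ∀ a ∈ envV Φ V W, j x * a ∈ (bigP : Submodule Φ _))
    (hQ : ∀ u ∈ envM Φ V W, ∀ m ∈ lazardM Φ V W, ∀ v ∈ envV Φ V W,
      j x * (u * j m * v) ∈ (bigP : Submodule Φ _)) :
    ∀ p ∈ (bigP : Submodule Φ _), j x * p ∈ (bigP : Submodule Φ _) := by
  intro p hp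
  obtain ⟨a, ha, b, hb, rfl⟩ := Submodule.mem_sup.1 hp
  rw [mul_add]
  refine add_mem (hA a ha) ?_
  refine Submodule.mul_induction_on hb (fun c hc v hv => ?_)
    (fun s t hs ht => by rw [mul_add]; exact add_mem hs ht)
  have : ∀ c', c' ∈ Subalgebra.toSubmodule (envM Φ V W) *
      Submodule.map (UniversalEnvelopingAlgebra.ι Φ).toLinearMap (lazardM Φ V W) →
      j x * (c' * v) ∈ (bigP : Submodule Φ _) := by
    intro c' hc'
    refine Submodule.mul_induction_on hc' (fun u hu m hm => ?_)
      (fun s t hs ht => by rw [add_mul, mul_add]; exact add_mem hs ht)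
    obtain ⟨m', hm', rfl⟩ := hm
    exact hQ u hu m' hm' v hv
  exact this c hc

lemma case_W (w : W) :
    ∀ p ∈ (bigP : Submodule Φ _), j (ιW Φ V W w) * p ∈ (bigP : Submodule Φ _) := by
  have hxM : j (ιW Φ V W w) ∈ Submodule.map (UniversalEnvelopingAlgebra.ι Φ).toLinearMap
      (lazardM Φ V W) := ⟨ιW Φ V W w, subset_adSpan' Φ _ _ ⟨w, rfl⟩, rfl⟩
  have hxE : j (ιW Φ V W w) ∈ envM Φ V W :=
    Algebra.subset_adjoin ⟨ιW Φ V W w, LieSubmodule.subset_lieSpan ⟨w, rfl⟩, rfl⟩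
  refine reduce _ (fun a ha => ?_) (fun u hu m hm v hv => ?_)
  · refine Submodule.mem_sup_right ?_
    have h1 : j (ιW Φ V W w) * a = 1 * j (ιW Φ V W w) * a := by rw [one_mul]
    rw [h1]
    exact mem_triple ((envM Φ V W).one_mem) hxM ha
  · have h1 : j (ιW Φ V W w) * (u * j m * v) = (j (ιW Φ V W w) * u) * j m * v := by
      noncomm_ring
    rw [h1]
    exact Submodule.mem_sup_right (mem_triple (mul_mem hxE hu) ⟨m, hm, rfl⟩ hv)

lemma case_V (v₀ : V) :
    ∀ p ∈ (bigP : Submodule Φ _), j (ιV Φ V W v₀) * p ∈ (bigP : Submodule Φ _) := by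
  have hxl : ιV Φ V W v₀ ∈ lieV Φ V W := LieSubalgebra.subset_lieSpan ⟨v₀, rfl⟩
  have hxE : j (ιV Φ V W v₀) ∈ envV Φ V W := Algebra.subset_adjoin ⟨ιV Φ V W v₀, hxl, rfl⟩
  refine reduce _ (fun a ha => ?_) (fun u hu m hm v hv => ?_)
  · exact Submodule.mem_sup_left ((Subalgebra.mem_toSubmodule _).2 (mul_mem hxE ha))
  · set x := ιV Φ V W v₀
    have hd : j x * u - u * j x ∈ envM Φ V W := comm_mem_envM x hu
    have hc : ⁅x, m⁆ ∈ lazardM Φ V W := adSpan_lie_mem' Φ hxl hm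
    have hcm : j x * j m - j m * j x ∈ Submodule.map
        (UniversalEnvelopingAlgebra.ι Φ).toLinearMap (lazardM Φ V W) :=
      ⟨⁅x, m⁆, hc, by rw [LieHom.coe_toLinearMap, LieHom.map_lie, Ring.lie_def]⟩
    have hid : j x * (u * j m * v) =
        (j x * u - u * j x) * j m * v + u * (j x * j m - j m * j x) * v +
          u * j m * (j x * v) := by noncomm_ring
    rw [hid]
    exact Submodule.mem_sup_right (add_mem (add_mem (mem_triple hd ⟨m, hm, rfl⟩ hv)
      (mem_triple hu hcm hv)) (mem_triple hu ⟨m, hm, rfl⟩ (mul_mem hxE hv)))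

/-- A Lie subalgebra of the free Lie module containing the range of `ι` is everything. -/
lemma lie_gen (K : LieSubalgebra Φ L') (h : ∀ a : V × W, FreeLieModule.ι Φ (V × W) a ∈ K)
    (x : L') : x ∈ K := by
  obtain ⟨y, rfl⟩ := Submodule.mkQ_surjective (freeLieModuleRel Φ (V × W)).toSubmodule x
  set F : FreeLieAlgebra Φ (V × W) →ₗ⁅Φ⁆ K :=
    FreeLieAlgebra.lift Φ fun a => (⟨FreeLieModule.ι Φ (V × W) a, h a⟩ : K) with hF
  have heq : lieQuotientMk Φ (freeLieModuleRel Φ (V × W)) = K.incl.comp F :=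
    FreeLieAlgebra.hom_ext fun a => by
      rw [LieHom.comp_apply, hF, FreeLieAlgebra.lift_of_apply]; rfl
  have h0 : (freeLieModuleRel Φ (V × W)).toSubmodule.mkQ y =
      lieQuotientMk Φ (freeLieModuleRel Φ (V × W)) y := rfl
  rw [h0, heq, LieHom.comp_apply]
  exact (F y).2

lemma key (x : L') :
    ∀ p ∈ (bigP : Submodule Φ _), j x * p ∈ (bigP : Submodule Φ _) := by
  let T : LieSubalgebra Φ L' :=
    { carrier := {x : L' | ∀ p ∈ (bigP : Submodule Φ _), j x * p ∈ (bigP : Submodule Φ _)}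
      zero_mem' := fun p hp => by
        rw [map_zero, zero_mul]; exact Submodule.zero_mem _
      add_mem' := fun {a b} ha hb p hp => by
        rw [map_add, add_mul]; exact add_mem (ha p hp) (hb p hp)
      smul_mem' := fun c {a} ha p hp => by
        rw [map_smul, smul_mul_assoc]; exact Submodule.smul_mem _ c (ha p hp)
      lie_mem' := fun {a b} ha hb p hp => by
        have h1 : j ⁅a, b⁆ * p = j a * (j b * p) - j b * (j a * p) := by
          rw [LieHom.map_lie, Ring.lie_def]; noncomm_ring
        rw [h1]
        exact sub_mem (ha _ (hb p hp)) (hb _ (ha p hp)) }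
  have hT : x ∈ T := by
    refine lie_gen T (fun a => ?_) x
    have e1 : ιV Φ V W a.1 = FreeLieModule.ι Φ (V × W) (a.1, 0) := by
      simp [ιV]
    have e2 : ιW Φ V W a.2 = FreeLieModule.ι Φ (V × W) (0, a.2) := by
      simp [ιW]
    have h2 : ιV Φ V W a.1 + ιW Φ V W a.2 = FreeLieModule.ι Φ (V × W) a := by
      rw [e1, e2, ← map_add]
      congr 1
      simp
    rw [← h2]
    exact T.add_mem (case_V a.1) (case_W a.2)
  exact hT

end Aux

/-- **Lemma 2, part 2.** Inside the universal enveloping algebra of `L(V ⊕ W)`, one has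
`U(L(V ⊕ W)) = U(L(V)) + U(L(M)) · M · U(L(V))` as a sum of subspaces, where `M` denotes
the image of `M = U(L(V)) · W` under the canonical map `L(V ⊕ W) → U(L(V ⊕ W))`. -/
theorem env_eq_envV_add_envM_mul_M_mul_envV :
    Subalgebra.toSubmodule (envV Φ V W) ⊔
      Subalgebra.toSubmodule (envM Φ V W) *
        Submodule.map (UniversalEnvelopingAlgebra.ι Φ).toLinearMap (lazardM Φ V W) *
        Subalgebra.toSubmodule (envV Φ V W) = ⊤ := by
  rw [eq_top_iff]
  rintro u -
  have h1 : (1 : UniversalEnvelopingAlgebra Φ (FreeLieModule Φ (V × W))) ∈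
      (bigP : Submodule Φ _) := Submodule.mem_sup_left ((Subalgebra.mem_toSubmodule _).2 (one_mem (envV Φ V W)))
  suffices h : ∀ p ∈ (bigP : Submodule Φ _), u * p ∈ (bigP : Submodule Φ _) by
    have h2 := h 1 h1
    rwa [mul_one] at h2
  obtain ⟨t, rfl⟩ : ∃ t, UniversalEnvelopingAlgebra.mkAlgHom Φ _ t = u :=
    RingCon.mkₐ_surjective (α := Φ) _ u
  induction t using TensorAlgebra.induction with
  | algebraMap r =>
      intro p hp
      rw [AlgHom.commutes, Algebra.algebraMap_eq_smul_one, smul_mul_assoc, one_mul]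
      exact Submodule.smul_mem _ r hp
  | ι x =>
      intro p hp
      exact key x p hp
  | mul a b ha hb =>
      intro p hp
      rw [map_mul, mul_assoc]
      exact ha _ (hb _ hp)
  | add a b ha hb =>
      intro p hp
      rw [map_add, add_mul]
      exact add_mem (ha p hp) (hb p hp)
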